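/- The point (π, 0) is the global minimum of Ĝ₀: for every Λ > 0 and δ > 0 and all g ∈ ℝ, G ∈ (−Λ, Λ), one has Ĝ₀(g, G) ≥ −δ, with equality if and only if G = 0 and cos g = −1. -/

import Mathlib

/-- The planar Euler integral normalized by `Λ²` (with `Θ = 0`):
`Ĝ₀(g, G) = G²/Λ² + δ √(1 − G²/Λ²) cos g`. -/
noncomputable def Ghat (Λ δ : ℝ) (g G : ℝ) : ℝ :=
  G ^ 2 / Λ ^ 2 + δ * Real.sqrt (1 - G ^ 2 / Λ ^ 2) * Real.cos g

/-- `(π, 0)` is the global minimum of `Ĝ₀`: for all `g ∈ ℝ` and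
`G ∈ (−Λ, Λ)` one has `Ĝ₀(g,G) ≥ −δ`, with equality iff `G = 0` and `cos g = −1`. -/
theorem Ghat_global_min (Λ δ : ℝ) (hΛ : 0 < Λ) (hδ : 0 < δ) :
    ∀ g G : ℝ, G ∈ Set.Ioo (-Λ) Λ →
      -δ ≤ Ghat Λ δ g G ∧ (Ghat Λ δ g G = -δ ↔ G = 0 ∧ Real.cos g = -1) := by
  intro g G hG
  have hx : 0 ≤ G ^ 2 / Λ ^ 2 := by positivity
  set s : ℝ := Real.sqrt (1 - G ^ 2 / Λ ^ 2) with hs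
  have hs0 : 0 ≤ s := Real.sqrt_nonneg _
  have hs1 : s ≤ 1 := Real.sqrt_le_one.mpr (by linarith)
  have hc1 : Real.cos g ≤ 1 := Real.cos_le_one g
  have hc2 : -1 ≤ Real.cos g := Real.neg_one_le_cos g
  have hkey : 0 ≤ 1 + s * Real.cos g := by nlinarith
  constructor
  · unfold Ghat
    rw [← hs]
    nlinarith
  · constructor
    · intro heq
      unfold Ghat at heq
      rw [← hs] at heq
      have hx0 : G ^ 2 / Λ ^ 2 = 0 := by nlinarith
      have hG0 : G = 0 := by
        have h2 := hx0
        field_simp at h2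
        simpa using h2
      refine ⟨hG0, ?_⟩
      have hs1' : s = 1 := by
        rw [hs, hG0]; simp
      rw [hx0, hs1'] at heq
      have : δ * Real.cos g = -δ := by linarith
      have := mul_left_cancel₀ (ne_of_gt hδ) (by linarith [this] : δ * Real.cos g = δ * (-1))
      linarith
    · rintro ⟨hG0, hcg⟩
      unfold Ghat
      rw [hG0, hcg]
      norm_num
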